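/- Let n = 2 and μ = a_1 δ_{y_1} + a_2 δ_{y_2} with distinct y_1, y_2 ∈ I(2, Ω) and nonzero a_1, a_2 ∈ ℂ. Assume σ/m_min ≤ 1/8 and d_min = |y_1 − y_2| ≥ (3/Ω) · arcsin(2·(σ/m_min)^{1/3}). Let Y(ω) = F[μ](ω) + W(ω), ω ∈ [−Ω, Ω], with |W(ω)| < σ for all ω ∈ [−Ω, Ω]. If μ̂ = â_1 δ_{ŷ_1} + â_2 δ_{ŷ_2} with distinct ŷ_1, ŷ_2 ∈ I(2, Ω) is a σ-admissible measure of Y, then, after reordering ŷ_1, ŷ_2, one has |ŷ_1 − y_1| < d_min/2 and |ŷ_2 − y_2| < d_min/2. -/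

import Mathlib

set_option maxHeartbeats 1000000

/-- `|e^{ix} - e^{iy}| = 2 |sin((x-y)/2)|`. -/
lemma abs_exp_I_sub (x y : ℝ) :
    Norm.norm (Complex.exp ((x : ℂ) * Complex.I) - Complex.exp ((y : ℂ) * Complex.I))
      = 2 * |Real.sin ((x - y) / 2)| := by
  have hfact : Complex.exp ((x : ℂ) * Complex.I) - Complex.exp ((y : ℂ) * Complex.I)
      = Complex.exp ((((x + y) / 2 : ℝ) : ℂ) * Complex.I)
        * (2 * ((Real.sin ((x - y) / 2) : ℝ) : ℂ) * Complex.I) := by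
    have e1 : Complex.exp ((x : ℂ) * Complex.I)
        = Complex.exp ((((x + y) / 2 : ℝ) : ℂ) * Complex.I)
          * Complex.exp ((((x - y) / 2 : ℝ) : ℂ) * Complex.I) := by
      rw [← Complex.exp_add]; congr 1; push_cast; ring
    have e2 : Complex.exp ((y : ℂ) * Complex.I)
        = Complex.exp ((((x + y) / 2 : ℝ) : ℂ) * Complex.I)
          * Complex.exp ((-(((x - y) / 2 : ℝ) : ℂ)) * Complex.I) := by
      rw [← Complex.exp_add]; congr 1; push_cast; ring
    rw [e1, e2, ← mul_sub]
    congr 1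
    rw [Complex.exp_mul_I, Complex.exp_mul_I, Complex.ofReal_sin]
    rw [Complex.cos_neg, Complex.sin_neg]
    ring
  rw [hfact, norm_mul, norm_mul, Complex.norm_exp_ofReal_mul_I, Complex.norm_I, mul_one,
    one_mul, norm_mul, Complex.norm_real]
  simp

/-- `sin |x| = |sin x|` for `|x| ≤ π`. -/
lemma sin_abs_eq (x : ℝ) (hx : |x| ≤ Real.pi) : Real.sin |x| = |Real.sin x| := by
  rcases le_or_gt 0 x with h | h
  · rw [abs_of_nonneg h,
      abs_of_nonneg (Real.sin_nonneg_of_nonneg_of_le_pi h ((le_abs_self x).trans hx))]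
  · have hx' : -Real.pi ≤ x := by
      have := neg_abs_le x; linarith
    rw [abs_of_neg h, Real.sin_neg,
      abs_of_nonpos (Real.sin_nonpos_of_nonpos_of_neg_pi_le h.le hx')]

/-- Key quantitative lemma: a 4-term exponential sum with a dominant isolated node cannot be
uniformly small on `[-Ω, Ω]`. -/
lemma key_lemma (Ω σ m : ℝ) (hΩ : 0 < Ω) (hσ : 0 < σ) (hm : 0 < m)
    (hratio : σ / m ≤ 1 / 8)
    (t₁ t₂ t₃ t₄ : ℝ) (c₁ c₂ c₃ c₄ : ℂ) (hc : m ≤ Norm.norm c₁)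
    (d : ℝ) (hd : 3 / Ω * Real.arcsin (2 * (σ / m) ^ ((1 : ℝ) / 3)) ≤ d)
    (h2 : d ≤ |t₁ - t₂|) (h3 : d / 2 ≤ |t₁ - t₃|) (h4 : d / 2 ≤ |t₁ - t₄|)
    (hb2 : |t₁ - t₂| < Real.pi / Ω) (hb3 : |t₁ - t₃| < Real.pi / Ω)
    (hb4 : |t₁ - t₄| < Real.pi / Ω)
    (G : ℝ → ℂ)
    (hGdef : ∀ ω : ℝ, G ω = c₁ * Complex.exp (Complex.I * (t₁ : ℂ) * (ω : ℂ))
      + c₂ * Complex.exp (Complex.I * (t₂ : ℂ) * (ω : ℂ))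
      + c₃ * Complex.exp (Complex.I * (t₃ : ℂ) * (ω : ℂ))
      + c₄ * Complex.exp (Complex.I * (t₄ : ℂ) * (ω : ℂ)))
    (hG : ∀ ω ∈ Set.Icc (-Ω) Ω, Norm.norm (G ω) < 2 * σ) : False := by
  have hπ := Real.pi_pos
  set ε : ℝ := σ / m with hεdef
  have hεpos : 0 < ε := div_pos hσ hm
  set r : ℝ := ε ^ ((1 : ℝ) / 3) with hrdef
  have hrpos : 0 < r := Real.rpow_pos_of_pos hεpos _
  have hr3 : r ^ (3 : ℕ) = ε := by
    rw [hrdef, ← Real.rpow_natCast (ε ^ ((1 : ℝ) / 3)) 3, ← Real.rpow_mul hεpos.le]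
    norm_num
  have hr_le : r ≤ 1 / 2 := by
    have h8 : ((1 : ℝ) / 8) ^ ((1 : ℝ) / 3) = 1 / 2 := by
      have h12 : ((1 : ℝ) / 8) = (1 / 2 : ℝ) ^ (3 : ℕ) := by norm_num
      rw [h12, ← Real.rpow_natCast (1 / 2 : ℝ) 3, ← Real.rpow_mul (by norm_num)]
      norm_num
    calc r ≤ ((1 : ℝ) / 8) ^ ((1 : ℝ) / 3) :=
          Real.rpow_le_rpow hεpos.le hratio (by norm_num)
      _ = 1 / 2 := h8
  set s : ℝ := Real.arcsin (2 * r) with hsdef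
  have hs_sin : Real.sin s = 2 * r := Real.sin_arcsin (by linarith) (by linarith)
  have hs_nonneg : 0 ≤ s := Real.arcsin_nonneg.2 (by linarith)
  have hs_pos : 0 < s := Real.arcsin_pos.2 (by linarith)
  have hs_le : s ≤ Real.pi / 2 := Real.arcsin_le_pi_div_two _
  have hd_pos : 0 < d := by
    have : 0 < 3 / Ω * s := by positivity
    linarith
  have hsd : 3 * s ≤ Ω * d := by
    rw [div_mul_eq_mul_div, div_le_iff₀ hΩ] at hd
    linarith [hd]
  -- monotonicity helper
  have main_sin : ∀ u θ : ℝ, θ ≤ Ω * u / 3 → u < Real.pi / Ω → 0 ≤ θ → θ ≤ Real.pi / 2 →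
      Real.sin θ ≤ Real.sin (Ω * u / 3) := by
    intro u θ h1 h2' h3' h4'
    have hup : Ω * u < Real.pi := by
      rw [lt_div_iff₀ hΩ] at h2'
      nlinarith
    exact Real.sin_le_sin_of_le_of_le_pi_div_two (by linarith) (by nlinarith) h1
  have h2s : 2 * r ≤ Real.sin (Ω * |t₁ - t₂| / 3) := by
    rw [← hs_sin]
    exact main_sin _ s (by nlinarith) hb2 hs_nonneg hs_le
  have hhalf : r ≤ Real.sin (s / 2) := by
    have hsm := Real.sin_two_mul (s / 2)
    rw [show 2 * (s / 2) = s by ring, hs_sin] at hsm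
    have hc1 : Real.cos (s / 2) ≤ 1 := Real.cos_le_one _
    have hsn : 0 ≤ Real.sin (s / 2) :=
      Real.sin_nonneg_of_nonneg_of_le_pi (by linarith) (by linarith)
    nlinarith
  have h3s : r ≤ Real.sin (Ω * |t₁ - t₃| / 3) :=
    le_trans hhalf (main_sin _ (s / 2) (by nlinarith) hb3 (by linarith) (by linarith))
  have h4s : r ≤ Real.sin (Ω * |t₁ - t₄| / 3) :=
    le_trans hhalf (main_sin _ (s / 2) (by nlinarith) hb4 (by linarith) (by linarith))
  -- complex side
  set E : ℝ → ℂ := fun t => Complex.exp (((t * (-Ω) : ℝ) : ℂ) * Complex.I) with hEdef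
  set B : ℝ → ℂ := fun t => Complex.exp (((t * (2 * Ω / 3) : ℝ) : ℂ) * Complex.I) with hBdef
  have hEabs : ∀ t : ℝ, Norm.norm (E t) = 1 := by
    intro t; simp only [hEdef]; exact Complex.norm_exp_ofReal_mul_I _
  have hBabs : ∀ t : ℝ, Norm.norm (B t) = 1 := by
    intro t; simp only [hBdef]; exact Complex.norm_exp_ofReal_mul_I _
  have hval : ∀ (t : ℝ) (k : ℕ) (w : ℝ), w = -Ω + k * (2 * Ω / 3) →
      Complex.exp (Complex.I * (t : ℂ) * (w : ℂ)) = E t * (B t) ^ k := by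
    intro t k w hw
    simp only [hEdef, hBdef]
    rw [← Complex.exp_nat_mul, ← Complex.exp_add]
    congr 1
    subst hw
    push_cast
    ring
  have hw0 : ∀ t : ℝ, Complex.exp (Complex.I * (t : ℂ) * ((-Ω : ℝ) : ℂ)) = E t * (B t) ^ 0 :=
    fun t => hval t 0 (-Ω) (by push_cast; ring)
  have hw1 : ∀ t : ℝ, Complex.exp (Complex.I * (t : ℂ) * ((-Ω / 3 : ℝ) : ℂ)) = E t * (B t) ^ 1 :=
    fun t => hval t 1 (-Ω / 3) (by push_cast; ring)
  have hw2 : ∀ t : ℝ, Complex.exp (Complex.I * (t : ℂ) * ((Ω / 3 : ℝ) : ℂ)) = E t * (B t) ^ 2 :=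
    fun t => hval t 2 (Ω / 3) (by push_cast; ring)
  have hw3 : ∀ t : ℝ, Complex.exp (Complex.I * (t : ℂ) * ((Ω : ℝ) : ℂ)) = E t * (B t) ^ 3 :=
    fun t => hval t 3 Ω (by push_cast; ring)
  have e0 : G (-Ω) = c₁ * (E t₁ * (B t₁) ^ 0) + c₂ * (E t₂ * (B t₂) ^ 0)
      + c₃ * (E t₃ * (B t₃) ^ 0) + c₄ * (E t₄ * (B t₄) ^ 0) := by
    rw [hGdef, hw0 t₁, hw0 t₂, hw0 t₃, hw0 t₄]
  have e1 : G (-Ω / 3) = c₁ * (E t₁ * (B t₁) ^ 1) + c₂ * (E t₂ * (B t₂) ^ 1)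
      + c₃ * (E t₃ * (B t₃) ^ 1) + c₄ * (E t₄ * (B t₄) ^ 1) := by
    rw [hGdef, hw1 t₁, hw1 t₂, hw1 t₃, hw1 t₄]
  have e2 : G (Ω / 3) = c₁ * (E t₁ * (B t₁) ^ 2) + c₂ * (E t₂ * (B t₂) ^ 2)
      + c₃ * (E t₃ * (B t₃) ^ 2) + c₄ * (E t₄ * (B t₄) ^ 2) := by
    rw [hGdef, hw2 t₁, hw2 t₂, hw2 t₃, hw2 t₄]
  have e3 : G Ω = c₁ * (E t₁ * (B t₁) ^ 3) + c₂ * (E t₂ * (B t₂) ^ 3)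
      + c₃ * (E t₃ * (B t₃) ^ 3) + c₄ * (E t₄ * (B t₄) ^ 3) := by
    rw [hGdef, hw3 t₁, hw3 t₂, hw3 t₃, hw3 t₄]
  have hid : G Ω - (B t₂ + B t₃ + B t₄) * G (Ω / 3)
      + (B t₂ * B t₃ + B t₂ * B t₄ + B t₃ * B t₄) * G (-Ω / 3)
      - (B t₂ * B t₃ * B t₄) * G (-Ω)
      = c₁ * E t₁ * ((B t₁ - B t₂) * ((B t₁ - B t₃) * (B t₁ - B t₄))) := by
    rw [e0, e1, e2, e3]; ring
  -- upper bound
  have habs_s1 : Norm.norm (B t₂ + B t₃ + B t₄) ≤ 3 := by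
    calc Norm.norm (B t₂ + B t₃ + B t₄)
        ≤ Norm.norm (B t₂ + B t₃) + Norm.norm (B t₄) := norm_add_le _ _
      _ ≤ Norm.norm (B t₂) + Norm.norm (B t₃) + Norm.norm (B t₄) :=
          add_le_add_left (norm_add_le _ _) _
      _ = 3 := by rw [hBabs, hBabs, hBabs]; norm_num
  have habs_s2 : Norm.norm (B t₂ * B t₃ + B t₂ * B t₄ + B t₃ * B t₄) ≤ 3 := by
    calc Norm.norm (B t₂ * B t₃ + B t₂ * B t₄ + B t₃ * B t₄)
        ≤ Norm.norm (B t₂ * B t₃ + B t₂ * B t₄) + Norm.norm (B t₃ * B t₄) :=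
          norm_add_le _ _
      _ ≤ Norm.norm (B t₂ * B t₃) + Norm.norm (B t₂ * B t₄) + Norm.norm (B t₃ * B t₄) :=
          add_le_add_left (norm_add_le _ _) _
      _ = 3 := by
          rw [norm_mul, norm_mul, norm_mul, hBabs, hBabs, hBabs]; norm_num
  have habs_s3 : Norm.norm (B t₂ * B t₃ * B t₄) = 1 := by
    rw [norm_mul, norm_mul, hBabs, hBabs, hBabs]; norm_num
  have tri : ∀ a b c d' : ℂ, Norm.norm (a - b + c - d')
      ≤ Norm.norm a + Norm.norm b + Norm.norm c + Norm.norm d' := by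
    intro a b c d'
    calc Norm.norm (a - b + c - d') ≤ Norm.norm (a - b + c) + Norm.norm d' := by
          simpa [sub_eq_add_neg] using norm_add_le (a - b + c) (-d')
      _ ≤ Norm.norm (a - b) + Norm.norm c + Norm.norm d' :=
          add_le_add_left (norm_add_le _ _) _
      _ ≤ Norm.norm a + Norm.norm b + Norm.norm c + Norm.norm d' := by
          have : Norm.norm (a - b) ≤ Norm.norm a + Norm.norm b := by
            simpa [sub_eq_add_neg] using norm_add_le a (-b)
          linarith
  have u3 := hG Ω ⟨by linarith, le_refl Ω⟩
  have u2 := hG (Ω / 3) ⟨by linarith, by linarith⟩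
  have u1 := hG (-Ω / 3) ⟨by linarith, by linarith⟩
  have u0 := hG (-Ω) ⟨le_refl _, by linarith⟩
  have p1 : Norm.norm ((B t₂ + B t₃ + B t₄) * G (Ω / 3)) ≤ 3 * (2 * σ) := by
    rw [norm_mul]
    exact mul_le_mul habs_s1 u2.le (norm_nonneg _) (by norm_num)
  have p2 : Norm.norm ((B t₂ * B t₃ + B t₂ * B t₄ + B t₃ * B t₄) * G (-Ω / 3))
      ≤ 3 * (2 * σ) := by
    rw [norm_mul]
    exact mul_le_mul habs_s2 u1.le (norm_nonneg _) (by norm_num)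
  have p3 : Norm.norm ((B t₂ * B t₃ * B t₄) * G (-Ω)) ≤ 2 * σ := by
    rw [norm_mul, habs_s3, one_mul]; exact u0.le
  have hub : Norm.norm (G Ω - (B t₂ + B t₃ + B t₄) * G (Ω / 3)
      + (B t₂ * B t₃ + B t₂ * B t₄ + B t₃ * B t₄) * G (-Ω / 3)
      - (B t₂ * B t₃ * B t₄) * G (-Ω)) < 16 * σ := by
    have htr := tri (G Ω) ((B t₂ + B t₃ + B t₄) * G (Ω / 3))
      ((B t₂ * B t₃ + B t₂ * B t₄ + B t₃ * B t₄) * G (-Ω / 3))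
      ((B t₂ * B t₃ * B t₄) * G (-Ω))
    linarith
  -- lower bound
  have habs_diff : ∀ u v : ℝ, Norm.norm (B u - B v) = 2 * |Real.sin ((u - v) * Ω / 3)| := by
    intro u v
    simp only [hBdef]
    rw [abs_exp_I_sub]
    rw [show (u * (2 * Ω / 3) - v * (2 * Ω / 3)) / 2 = (u - v) * Ω / 3 from by ring]
  have flow : ∀ u : ℝ, |u| < Real.pi / Ω →
      Real.sin (Ω * |u| / 3) ≤ |Real.sin (u * Ω / 3)| := by
    intro u hu
    have hkey : Ω * |u| / 3 = |u * Ω / 3| := by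
      rw [abs_div, abs_mul, abs_of_pos hΩ]
      rw [show |(3 : ℝ)| = 3 from by norm_num]
      ring
    have hle : |u * Ω / 3| ≤ Real.pi := by
      rw [← hkey]
      rw [lt_div_iff₀ hΩ] at hu
      nlinarith [abs_nonneg u]
    rw [hkey, sin_abs_eq _ hle]
  have f2 : 2 * (2 * r) ≤ Norm.norm (B t₁ - B t₂) := by
    rw [habs_diff]
    have := flow (t₁ - t₂) hb2
    linarith
  have f3 : 2 * r ≤ Norm.norm (B t₁ - B t₃) := by
    rw [habs_diff]
    have := flow (t₁ - t₃) hb3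
    linarith
  have f4 : 2 * r ≤ Norm.norm (B t₁ - B t₄) := by
    rw [habs_diff]
    have := flow (t₁ - t₄) hb4
    linarith
  have hσeq : σ = m * (r * (r * r)) := by
    have h1 : r * (r * r) = ε := by rw [← hr3]; ring
    rw [h1, hεdef, mul_div_cancel₀ _ (ne_of_gt hm)]
  have hlow : 16 * σ ≤ Norm.norm (c₁ * E t₁ * ((B t₁ - B t₂) * ((B t₁ - B t₃) * (B t₁ - B t₄)))) := by
    rw [norm_mul, norm_mul, norm_mul, norm_mul, hEabs, mul_one]
    have n1 : (2 * r) * (2 * r) ≤ Norm.norm (B t₁ - B t₃) * Norm.norm (B t₁ - B t₄) :=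
      mul_le_mul f3 f4 (by positivity) (norm_nonneg _)
    have n2 : (2 * (2 * r)) * ((2 * r) * (2 * r))
        ≤ Norm.norm (B t₁ - B t₂) * (Norm.norm (B t₁ - B t₃) * Norm.norm (B t₁ - B t₄)) :=
      mul_le_mul f2 n1 (by positivity) (norm_nonneg _)
    have n3 : m * ((2 * (2 * r)) * ((2 * r) * (2 * r)))
        ≤ Norm.norm c₁ * (Norm.norm (B t₁ - B t₂)
          * (Norm.norm (B t₁ - B t₃) * Norm.norm (B t₁ - B t₄))) :=
      mul_le_mul hc n2 (by positivity) (norm_nonneg _)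
    calc 16 * σ = m * ((2 * (2 * r)) * ((2 * r) * (2 * r))) := by rw [hσeq]; ring
      _ ≤ _ := n3
  rw [hid] at hub
  linarith

/-- **Stability of location reconstruction, case `n = 2` (Theorem 3.3).**
Let `μ = a₁ δ_{y₁} + a₂ δ_{y₂}` with distinct `y₁, y₂ ∈ I(2,Ω)` and nonzero amplitudes,
assume `σ/m_min ≤ 1/8` and `d_min = |y₁ − y₂| ≥ (3/Ω) arcsin(2 (σ/m_min)^{1/3})`.
If `μ̂ = â₁ δ_{ŷ₁} + â₂ δ_{ŷ₂}`, with distinct `ŷ₁, ŷ₂ ∈ I(2,Ω)`, is a σ-admissible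
measure of `Y = F[μ] + W` (`|W| < σ` on `[−Ω,Ω]`), then after reordering
`|ŷ₁ − y₁| < d_min/2` and `|ŷ₂ − y₂| < d_min/2`. -/
theorem location_recovery_stability_two_points
    (Ω σ : ℝ) (hΩ : 0 < Ω) (hσ : 0 < σ)
    (y₁ y₂ : ℝ) (hy : y₁ ≠ y₂)
    (a₁ a₂ : ℂ) (ha₁ : a₁ ≠ 0) (ha₂ : a₂ ≠ 0)
    (hloc₁ : y₁ ∈ Set.Ioo (-(Real.pi / (2 * Ω))) (Real.pi / (2 * Ω)))
    (hloc₂ : y₂ ∈ Set.Ioo (-(Real.pi / (2 * Ω))) (Real.pi / (2 * Ω)))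
    (mmin : ℝ) (hmmin : mmin = min (Norm.norm a₁) (Norm.norm a₂))
    (hratio : σ / mmin ≤ 1 / 8)
    (dmin : ℝ) (hdmin : dmin = |y₁ - y₂|)
    (hsep : 3 / Ω * Real.arcsin (2 * (σ / mmin) ^ ((1 : ℝ) / 3)) ≤ dmin)
    (W : ℝ → ℂ) (hW : ∀ ω ∈ Set.Icc (-Ω) Ω, Norm.norm (W ω) < σ)
    (yh₁ yh₂ : ℝ) (hyh : yh₁ ≠ yh₂) (ah₁ ah₂ : ℂ)
    (hloch₁ : yh₁ ∈ Set.Ioo (-(Real.pi / (2 * Ω))) (Real.pi / (2 * Ω)))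
    (hloch₂ : yh₂ ∈ Set.Ioo (-(Real.pi / (2 * Ω))) (Real.pi / (2 * Ω)))
    (hadm : ∀ ω ∈ Set.Icc (-Ω) Ω,
      Norm.norm
        (ah₁ * Complex.exp (Complex.I * (yh₁ : ℂ) * (ω : ℂ))
          + ah₂ * Complex.exp (Complex.I * (yh₂ : ℂ) * (ω : ℂ))
          - (a₁ * Complex.exp (Complex.I * (y₁ : ℂ) * (ω : ℂ))
            + a₂ * Complex.exp (Complex.I * (y₂ : ℂ) * (ω : ℂ)) + W ω)) < σ) :
    (|yh₁ - y₁| < dmin / 2 ∧ |yh₂ - y₂| < dmin / 2) ∨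
    (|yh₂ - y₁| < dmin / 2 ∧ |yh₁ - y₂| < dmin / 2) := by
  have hm : 0 < mmin := by
    rw [hmmin]
    exact lt_min (norm_pos_iff.mpr ha₁) (norm_pos_iff.mpr ha₂)
  -- separation bound for points in the interval
  have hππ : Real.pi / (2 * Ω) + Real.pi / (2 * Ω) = Real.pi / Ω := by
    field_simp; ring
  have hsepb : ∀ a b : ℝ,
      a ∈ Set.Ioo (-(Real.pi / (2 * Ω))) (Real.pi / (2 * Ω)) →
      b ∈ Set.Ioo (-(Real.pi / (2 * Ω))) (Real.pi / (2 * Ω)) →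
      |a - b| < Real.pi / Ω := by
    intro a b ha hb
    rw [abs_sub_lt_iff]
    constructor <;> [skip; skip] <;>
      · have h1 := ha.1; have h2 := ha.2; have h3 := hb.1; have h4 := hb.2
        linarith
  by_contra hcon
  rw [not_or] at hcon
  obtain ⟨hP, hQ⟩ := hcon
  have hdisj1 : ¬(|yh₁ - y₁| < dmin / 2 ∧ |yh₁ - y₂| < dmin / 2) := by
    rintro ⟨u, v⟩
    have hle : |y₁ - y₂| ≤ |y₁ - yh₁| + |yh₁ - y₂| := abs_sub_le _ _ _
    rw [abs_sub_comm y₁ yh₁] at hle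
    rw [hdmin] at u v
    have : |y₁ - y₂| < |y₁ - y₂| := by linarith
    exact lt_irrefl _ this
  have hdisj2 : ¬(|yh₂ - y₁| < dmin / 2 ∧ |yh₂ - y₂| < dmin / 2) := by
    rintro ⟨u, v⟩
    have hle : |y₁ - y₂| ≤ |y₁ - yh₂| + |yh₂ - y₂| := abs_sub_le _ _ _
    rw [abs_sub_comm y₁ yh₂] at hle
    rw [hdmin] at u v
    have : |y₁ - y₂| < |y₁ - y₂| := by linarith
    exact lt_irrefl _ this
  have hfar : (dmin / 2 ≤ |yh₁ - y₁| ∧ dmin / 2 ≤ |yh₂ - y₁|) ∨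
      (dmin / 2 ≤ |yh₁ - y₂| ∧ dmin / 2 ≤ |yh₂ - y₂|) := by
    rcases lt_or_ge |yh₁ - y₁| (dmin / 2) with h11 | h11
    · right
      exact ⟨le_of_not_gt fun hv => hdisj1 ⟨h11, hv⟩,
        le_of_not_gt fun hv => hP ⟨h11, hv⟩⟩
    · rcases lt_or_ge |yh₂ - y₁| (dmin / 2) with h21 | h21
      · right
        exact ⟨le_of_not_gt fun hv => hQ ⟨h21, hv⟩,
          le_of_not_gt fun hv => hdisj2 ⟨h21, hv⟩⟩
      · left; exact ⟨h11, h21⟩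
  have hGbound : ∀ (b₁ b₂ : ℂ) (u₁ u₂ : ℝ),
      (∀ ω : ℝ, b₁ * Complex.exp (Complex.I * (u₁ : ℂ) * (ω : ℂ))
          + b₂ * Complex.exp (Complex.I * (u₂ : ℂ) * (ω : ℂ))
          + ah₁ * Complex.exp (Complex.I * (yh₁ : ℂ) * (ω : ℂ))
          + ah₂ * Complex.exp (Complex.I * (yh₂ : ℂ) * (ω : ℂ))
        = (ah₁ * Complex.exp (Complex.I * (yh₁ : ℂ) * (ω : ℂ))
          + ah₂ * Complex.exp (Complex.I * (yh₂ : ℂ) * (ω : ℂ))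
          - (a₁ * Complex.exp (Complex.I * (y₁ : ℂ) * (ω : ℂ))
            + a₂ * Complex.exp (Complex.I * (y₂ : ℂ) * (ω : ℂ)) + W ω)) + W ω) →
      ∀ ω ∈ Set.Icc (-Ω) Ω,
        Norm.norm (b₁ * Complex.exp (Complex.I * (u₁ : ℂ) * (ω : ℂ))
          + b₂ * Complex.exp (Complex.I * (u₂ : ℂ) * (ω : ℂ))
          + ah₁ * Complex.exp (Complex.I * (yh₁ : ℂ) * (ω : ℂ))
          + ah₂ * Complex.exp (Complex.I * (yh₂ : ℂ) * (ω : ℂ))) < 2 * σ := by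
    intro b₁ b₂ u₁ u₂ heq ω hω
    rw [heq ω]
    have h1 := hadm ω hω
    have h2 := hW ω hω
    calc Norm.norm _ ≤ Norm.norm _ + Norm.norm (W ω) := norm_add_le _ _
      _ < σ + σ := add_lt_add h1 h2
      _ = 2 * σ := by ring
  rcases hfar with ⟨hf1, hf2⟩ | ⟨hf1, hf2⟩
  · -- both reconstructed nodes far from y₁
    exact key_lemma Ω σ mmin hΩ hσ hm hratio y₁ y₂ yh₁ yh₂ (-a₁) (-a₂) ah₁ ah₂
      (by rw [norm_neg, hmmin]; exact min_le_left _ _)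
      dmin hsep (le_of_eq hdmin)
      (by rw [abs_sub_comm]; exact hf1) (by rw [abs_sub_comm]; exact hf2)
      (hsepb _ _ hloc₁ hloc₂) (hsepb _ _ hloc₁ hloch₁) (hsepb _ _ hloc₁ hloch₂)
      (fun ω => (-a₁) * Complex.exp (Complex.I * (y₁ : ℂ) * (ω : ℂ))
        + (-a₂) * Complex.exp (Complex.I * (y₂ : ℂ) * (ω : ℂ))
        + ah₁ * Complex.exp (Complex.I * (yh₁ : ℂ) * (ω : ℂ))
        + ah₂ * Complex.exp (Complex.I * (yh₂ : ℂ) * (ω : ℂ)))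
      (fun ω => rfl)
      (hGbound (-a₁) (-a₂) y₁ y₂ (fun ω => by ring))
  · -- both reconstructed nodes far from y₂
    exact key_lemma Ω σ mmin hΩ hσ hm hratio y₂ y₁ yh₁ yh₂ (-a₂) (-a₁) ah₁ ah₂
      (by rw [norm_neg, hmmin]; exact min_le_right _ _)
      dmin hsep (by rw [abs_sub_comm]; exact le_of_eq hdmin)
      (by rw [abs_sub_comm]; exact hf1) (by rw [abs_sub_comm]; exact hf2)
      (hsepb _ _ hloc₂ hloc₁) (hsepb _ _ hloc₂ hloch₁) (hsepb _ _ hloc₂ hloch₂)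
      (fun ω => (-a₂) * Complex.exp (Complex.I * (y₂ : ℂ) * (ω : ℂ))
        + (-a₁) * Complex.exp (Complex.I * (y₁ : ℂ) * (ω : ℂ))
        + ah₁ * Complex.exp (Complex.I * (yh₁ : ℂ) * (ω : ℂ))
        + ah₂ * Complex.exp (Complex.I * (yh₂ : ℂ) * (ω : ℂ)))
      (fun ω => rfl)
      (hGbound (-a₂) (-a₁) y₂ y₁ (fun ω => by ring))
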